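/- Let Q be a connected Laplacian matrix on V = {0,…,n} with n ≥ 2. For every pair of distinct indices i, j ∈ V there exist a linear functional f on ℝ^{n+1} and a constant c ∈ ℝ such that f(u_S) = c for every nonempty proper S ⊊ V with i ∈ S and j ∉ S, and f(u_T) < c for every nonempty proper T ⊊ V with not (i ∈ T and j ∉ T). Consequently the convex hull of F_{i,j} is an exposed face (a facet) of the Delaunay polytope H_{Del_G}(O), and all elements of F_{i,j} are in convex position. -/

import Mathlib

open Finset

/-- A Laplacian matrix of a multigraph on vertex set `Fin (n+1)`:
symmetric, nonpositive off-diagonal entries, all row sums zero. -/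
def IsLaplacian (n : ℕ) (Q : Matrix (Fin (n+1)) (Fin (n+1)) ℤ) : Prop :=
  (∀ i j, Q i j = Q j i) ∧ (∀ i j, i ≠ j → Q i j ≤ 0) ∧ (∀ i, ∑ j, Q i j = 0)

/-- A connected Laplacian matrix: the graph with an edge `{i,j}` whenever
`b_{ij} = -Q i j > 0` is connected. -/
def IsConnectedLaplacian (n : ℕ) (Q : Matrix (Fin (n+1)) (Fin (n+1)) ℤ) : Prop :=
  IsLaplacian n Q ∧ (SimpleGraph.fromRel (fun i j => Q i j ≠ 0)).Connected

/-- The Laplacian lattice: the subgroup of `ℤ^{n+1}` generated by the rows of `Q`. -/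
noncomputable def lapLattice (n : ℕ) (Q : Matrix (Fin (n+1)) (Fin (n+1)) ℤ) :
    AddSubgroup (Fin (n+1) → ℤ) :=
  AddSubgroup.closure (Set.range fun i => Q i)

/-- The hyperplane `H_0 = {x ∈ ℝ^{n+1} : ∑ x i = 0}`. -/
def H0 (n : ℕ) : Set (Fin (n+1) → ℝ) := {x | ∑ i, x i = 0}

/-- The simplicial distance function on `H_0`: `d_△(p,q) = max_i (p i - q i)`. -/
noncomputable def simpDist (n : ℕ) (p q : Fin (n+1) → ℝ) : ℝ :=
  Finset.univ.sup' Finset.univ_nonempty fun i => p i - q i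

/-- Coercion of an integer vector to a real vector. -/
noncomputable def intVec (n : ℕ) (q : Fin (n+1) → ℤ) : Fin (n+1) → ℝ := fun i => (q i : ℝ)

/-- The root lattice `A_n = {x ∈ ℤ^{n+1} : ∑ x i = 0}`. -/
def rootLattice (n : ℕ) : AddSubgroup (Fin (n+1) → ℤ) where
  carrier := {x | ∑ i, x i = 0}
  add_mem' := by
    intro a b ha hb
    simp only [Set.mem_setOf_eq, Pi.add_apply, Finset.sum_add_distrib] at *
    omega
  zero_mem' := by simp
  neg_mem' := by
    intro a ha
    simp only [Set.mem_setOf_eq, Pi.neg_apply, Finset.sum_neg_distrib] at *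
    omega

/-- The `i`-th row of `Q` as a real vector. -/
noncomputable def rowVec (n : ℕ) (Q : Matrix (Fin (n+1)) (Fin (n+1)) ℤ) (i : Fin (n+1)) :
    Fin (n+1) → ℝ := fun j => (Q i j : ℝ)

/-- `u^σ_k = b_{σ(0)} + ⋯ + b_{σ(k)}`. -/
noncomputable def uPerm (n : ℕ) (Q : Matrix (Fin (n+1)) (Fin (n+1)) ℤ)
    (σ : Equiv.Perm (Fin (n+1))) (k : Fin (n+1)) : Fin (n+1) → ℝ :=
  ∑ j ∈ Finset.Iic k, rowVec n Q (σ j)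

/-- The Delaunay polytope of the origin: the union over all permutations `σ`
of the simplices `△_σ = conv{u^σ_0, …, u^σ_n}`. -/
noncomputable def HDel (n : ℕ) (Q : Matrix (Fin (n+1)) (Fin (n+1)) ℤ) :
    Set (Fin (n+1) → ℝ) :=
  ⋃ σ : Equiv.Perm (Fin (n+1)), convexHull ℝ (Set.range (uPerm n Q σ))

/-- `u_S = ∑_{i ∈ S} b_i`, as a real vector. -/
noncomputable def uCut (n : ℕ) (Q : Matrix (Fin (n+1)) (Fin (n+1)) ℤ)
    (S : Finset (Fin (n+1))) : Fin (n+1) → ℝ := ∑ i ∈ S, rowVec n Q i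

/-- The face `F_{i,j} = {u_S : ∅ ≠ S ⊊ V, i ∈ S, j ∉ S}`. -/
def cutFace (n : ℕ) (Q : Matrix (Fin (n+1)) (Fin (n+1)) ℤ) (i j : Fin (n+1)) :
    Set (Fin (n+1) → ℝ) :=
  {x | ∃ S : Finset (Fin (n+1)), S.Nonempty ∧ S ≠ Finset.univ ∧
    i ∈ S ∧ j ∉ S ∧ x = uCut n Q S}

/-- The Delaunay polytope of the origin as a convex hull,
`H_{Del_G}(O) = conv{u_S : ∅ ≠ S ⊆ V}`. -/
noncomputable def HDelConv (n : ℕ) (Q : Matrix (Fin (n+1)) (Fin (n+1)) ℤ) :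
    Set (Fin (n+1) → ℝ) :=
  convexHull ℝ {x | ∃ S : Finset (Fin (n+1)), S.Nonempty ∧ x = uCut n Q S}

variable {n : ℕ} {Q : Matrix (Fin (n+1)) (Fin (n+1)) ℤ}

/-- real version of Q -/
noncomputable def QR (n : ℕ) (Q : Matrix (Fin (n+1)) (Fin (n+1)) ℤ) :
    Matrix (Fin (n+1)) (Fin (n+1)) ℝ := fun a b => ((Q a b : ℤ) : ℝ)

-- kernel lemma: any real vector in the kernel of QR is constant
lemma ker_const (hQ : IsConnectedLaplacian n Q) (x : Fin (n+1) → ℝ)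
    (hx : (QR n Q).mulVec x = 0) : ∀ a b, x a = x b := by
  obtain ⟨⟨hsym, hnonpos, hrow⟩, hconn⟩ := hQ
  -- let M be the max of x
  set M : ℝ := Finset.univ.sup' Finset.univ_nonempty x with hM
  -- step: if x a = M and Q a b ≠ 0, a ≠ b, then x b = M
  have step : ∀ a b, x a = M → a ≠ b → Q a b ≠ 0 → x b = M := by
    intro a b haM hab hQab
    have h0 : ∑ c, QR n Q a c * x c = 0 := congrFun hx a
    -- rewrite using row sum
    have hrowR : ∑ c, QR n Q a c = 0 := by
      have := hrow a
      have : ((∑ c, Q a c : ℤ) : ℝ) = 0 := by rw [this]; simp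
      simpa [QR] using this
    have h1 : ∑ c, QR n Q a c * (x c - x a) = 0 := by
      have : ∑ c, QR n Q a c * (x c - x a)
          = ∑ c, QR n Q a c * x c - (∑ c, QR n Q a c) * x a := by
        rw [Finset.sum_mul, ← Finset.sum_sub_distrib]; exact Finset.sum_congr rfl fun _ _ => by ring
      rw [this, h0, hrowR]; ring
    -- all terms over c ≠ a are nonneg
    have h2 : ∑ c ∈ Finset.univ.erase a, QR n Q a c * (x c - x a) = 0 := by
      rw [← h1]
      rw [Finset.sum_erase_eq_sub (Finset.mem_univ a)]
      simp
    have hnn : ∀ c ∈ Finset.univ.erase a, 0 ≤ QR n Q a c * (x c - x a) := by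
      intro c hc
      have hca : c ≠ a := Finset.ne_of_mem_erase hc
      have h3 : QR n Q a c ≤ 0 := by
        have := hnonpos a c (Ne.symm hca)
        simpa [QR] using (Int.cast_nonpos.mpr this : ((Q a c : ℤ):ℝ) ≤ 0)
      have h4 : x c - x a ≤ 0 := by
        have : x c ≤ M := Finset.le_sup' x (Finset.mem_univ c)
        rw [haM]; linarith
      nlinarith
    have hz := (Finset.sum_eq_zero_iff_of_nonneg hnn).mp h2 b
      (Finset.mem_erase.mpr ⟨Ne.symm hab, Finset.mem_univ b⟩)
    have hQabR : QR n Q a b ≠ 0 := by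
      simp [QR]; exact_mod_cast hQab
    have : x b - x a = 0 := by
      rcases mul_eq_zero.mp hz with h | h
      · exact absurd h hQabR
      · exact h
    linarith [haM ▸ this]
  -- the max is attained
  obtain ⟨a0, -, ha0⟩ := Finset.exists_mem_eq_sup' Finset.univ_nonempty x
  have ha0M : x a0 = M := ha0.symm
  -- propagate along walks
  have walk : ∀ (a b : Fin (n+1)),
      (SimpleGraph.fromRel (fun i j => Q i j ≠ 0)).Walk a b → x a = M → x b = M := by
    intro a b p
    induction p with
    | nil => exact id
    | cons h p ih =>
      intro haM
      rename_i u v w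
      apply ih
      obtain ⟨huv, h'⟩ := h
      rcases h' with h' | h'
      · exact step u v haM huv h'
      · exact step u v haM huv (by rw [hsym]; exact h')
  have hall : ∀ b, x b = M := by
    intro b
    obtain ⟨p⟩ := hconn.preconnected a0 b
    exact walk a0 b p ha0M
  intro a b; rw [hall a, hall b]

/-- sum functional -/
noncomputable def sumL (n : ℕ) : (Fin (n+1) → ℝ) →ₗ[ℝ] ℝ where
  toFun x := ∑ i, x i
  map_add' a b := by simp [Finset.sum_add_distrib]
  map_smul' c a := by simp [Finset.mul_sum]

lemma surj_onto_H (hQ : IsConnectedLaplacian n Q) (v : Fin (n+1) → ℝ)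
    (hv : ∑ i, v i = 0) : ∃ w, (QR n Q).mulVec w = v := by
  set L := (QR n Q).mulVecLin with hL
  -- range L ≤ ker sumL
  have hle : LinearMap.range L ≤ LinearMap.ker (sumL n) := by
    rintro _ ⟨w, rfl⟩
    have hcol : ∀ c, ∑ a, QR n Q a c = 0 := by
      intro c
      have h1 : ∑ a, Q a c = 0 := by
        rw [Finset.sum_congr rfl (fun a _ => hQ.1.1 a c)]
        exact hQ.1.2.2 c
      have : ((∑ a, Q a c : ℤ) : ℝ) = 0 := by rw [h1]; simp
      simpa [QR] using this
    simp only [LinearMap.mem_ker, sumL, LinearMap.coe_mk, AddHom.coe_mk]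
    show ∑ a, L w a = 0
    simp only [hL, Matrix.mulVecLin_apply, Matrix.mulVec, dotProduct]
    rw [Finset.sum_comm]
    apply Finset.sum_eq_zero
    intro c _
    rw [← Finset.sum_mul, hcol c, zero_mul]
  -- finrank of ker sumL is n
  have hrank_sum : Module.finrank ℝ (LinearMap.ker (sumL n)) = n := by
    have h1 := LinearMap.finrank_range_add_finrank_ker (sumL n)
    have h2 : LinearMap.range (sumL n) = ⊤ := by
      rw [LinearMap.range_eq_top]
      intro c
      refine ⟨fun _ => c / (n+1), ?_⟩
      simp [sumL]
      field_simp
    rw [h2] at h1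
    simp [Module.finrank_pi] at h1
    omega
  -- ker L ≤ span of constant 1
  have hker : LinearMap.ker L ≤ Submodule.span ℝ {(fun _ => (1:ℝ) : Fin (n+1) → ℝ)} := by
    intro x hx
    have hx' : (QR n Q).mulVec x = 0 := hx
    have hc := ker_const hQ x hx'
    have : x = x 0 • (fun _ => (1:ℝ)) := by
      funext b; simp [hc b 0]
    rw [this]
    exact Submodule.smul_mem _ _ (Submodule.mem_span_singleton_self _)
  have hkerrank : Module.finrank ℝ (LinearMap.ker L) ≤ 1 := by
    calc Module.finrank ℝ (LinearMap.ker L)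
        ≤ Module.finrank ℝ (Submodule.span ℝ {(fun _ => (1:ℝ) : Fin (n+1) → ℝ)}) :=
          Submodule.finrank_mono hker
      _ = 1 := finrank_span_singleton (by
          intro h; have := congrFun h 0; simp at this)
  have hrange : Module.finrank ℝ (LinearMap.range L) ≥ n := by
    have h1 := LinearMap.finrank_range_add_finrank_ker L
    simp [Module.finrank_pi] at h1
    omega
  have heq : LinearMap.range L = LinearMap.ker (sumL n) := by
    apply Submodule.eq_of_le_of_finrank_le hle
    rw [hrank_sum]; exact hrange
  have hvmem : v ∈ LinearMap.ker (sumL n) := by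
    simp only [LinearMap.mem_ker, sumL, LinearMap.coe_mk, AddHom.coe_mk]; exact hv
  rw [← heq] at hvmem
  obtain ⟨w, hw⟩ := hvmem
  exact ⟨w, hw⟩

/-- dot-product linear functional -/
noncomputable def dotL (n : ℕ) (w : Fin (n+1) → ℝ) : (Fin (n+1) → ℝ) →ₗ[ℝ] ℝ where
  toFun x := ∑ k, w k * x k
  map_add' a b := by simp [mul_add, Finset.sum_add_distrib]
  map_smul' c a := by
    simp only [Pi.smul_apply, smul_eq_mul, RingHom.id_apply, Finset.mul_sum]
    exact Finset.sum_congr rfl fun k _ => by ring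

lemma dotL_uCut (w : Fin (n+1) → ℝ) (S : Finset (Fin (n+1))) :
    dotL n w (uCut n Q S) = ∑ a ∈ S, (QR n Q).mulVec w a := by
  simp only [dotL, uCut, rowVec, LinearMap.coe_mk, AddHom.coe_mk, Matrix.mulVec,
    dotProduct, QR]
  simp only [Finset.sum_apply]
  rw [Finset.sum_comm]
  apply Finset.sum_congr rfl
  intro a _
  rw [Finset.mul_sum]
  apply Finset.sum_congr rfl
  intro k _
  show w a * rowVec n Q k a = ((Q k a : ℤ):ℝ) * w a
  simp [rowVec]; ring

/-- key lemma: if a point of a hull of a finite set maximizes a linear functional,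
it lies in the hull of the maximizers. -/
lemma mem_hull_argmax {G : Set (Fin (n+1) → ℝ)} (hG : G.Finite)
    (f : (Fin (n+1) → ℝ) →ₗ[ℝ] ℝ) (c : ℝ) (hb : ∀ y ∈ G, f y ≤ c)
    {x : Fin (n+1) → ℝ} (hx : x ∈ convexHull ℝ G) (hfx : f x = c) :
    x ∈ convexHull ℝ {y ∈ G | f y = c} := by
  rw [hG.convexHull_eq] at hx
  obtain ⟨w, hw0, hw1, hwx⟩ := hx
  have hxeq : x = ∑ y ∈ hG.toFinset, w y • y := by
    rw [← hwx]
    simp [Finset.centerMass, hw1]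
  have hfx' : ∑ y ∈ hG.toFinset, w y * f y = c := by
    rw [← hfx, hxeq]
    rw [map_sum]
    simp
  have hzero : ∑ y ∈ hG.toFinset, w y * (c - f y) = 0 := by
    have : ∑ y ∈ hG.toFinset, w y * (c - f y)
        = (∑ y ∈ hG.toFinset, w y) * c - ∑ y ∈ hG.toFinset, w y * f y := by
      rw [Finset.sum_mul, ← Finset.sum_sub_distrib]; exact Finset.sum_congr rfl fun _ _ => by ring
    rw [this, hw1, hfx']; ring
  have hterm : ∀ y ∈ hG.toFinset, w y * (c - f y) = 0 := by
    apply (Finset.sum_eq_zero_iff_of_nonneg ?_).mp hzero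
    intro y hy
    exact mul_nonneg (hw0 y (hG.mem_toFinset.mp hy))
      (by linarith [hb y (hG.mem_toFinset.mp hy)])
  set t := hG.toFinset.filter (fun y => f y = c) with ht
  have hwzero : ∀ y ∈ hG.toFinset, y ∉ t → w y = 0 := by
    intro y hy hyt
    have hne : f y ≠ c := by
      intro h; exact hyt (Finset.mem_filter.mpr ⟨hy, h⟩)
    have := hterm y hy
    rcases mul_eq_zero.mp this with h | h
    · exact h
    · exact absurd (by linarith : f y = c) hne
  have hsum_t : ∑ y ∈ t, w y = 1 := by
    rw [← hw1]
    exact Finset.sum_subset (Finset.filter_subset _ _)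
      (fun y hy hyt => hwzero y hy hyt)
  have hx_t : x = ∑ y ∈ t, w y • y := by
    rw [hxeq]
    exact (Finset.sum_subset (Finset.filter_subset _ _)
      (fun y hy hyt => by rw [hwzero y hy hyt, zero_smul])).symm
  have hcm : t.centerMass w id = x := by
    simp [Finset.centerMass, hsum_t, hx_t]
  rw [← hcm]
  apply Finset.centerMass_mem_convexHull
  · intro y hy
    exact hw0 y (hG.mem_toFinset.mp (Finset.mem_filter.mp hy).1)
  · rw [hsum_t]; norm_num
  · intro y hy
    obtain ⟨hy1, hy2⟩ := Finset.mem_filter.mp hy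
    exact ⟨hG.mem_toFinset.mp hy1, hy2⟩

-- sum over T of indicator of S
lemma sum_indicator (S T : Finset (Fin (n+1))) :
    ∑ a ∈ T, (if a ∈ S then (1:ℝ) else 0) = (T ∩ S).card := by
  rw [Finset.sum_ite_mem T S (fun _ => (1:ℝ))]
  simp

-- the integer inequality
lemma int_ineq (S T : Finset (Fin (n+1))) (hS : S.Nonempty) (hSu : S ≠ Finset.univ)
    (hT : T.Nonempty) (hTS : T ≠ S) :
    ((n:ℤ)+1) * ((T ∩ S).card : ℤ) - (T.card : ℤ) * S.card
      < ((n:ℤ)+1) * S.card - (S.card : ℤ) * S.card := by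
  have hm_le_s : (T ∩ S).card ≤ S.card := Finset.card_le_card (Finset.inter_subset_right)
  have hm_le_t : (T ∩ S).card ≤ T.card := Finset.card_le_card (Finset.inter_subset_left)
  have hs_le_n : S.card ≤ n := by
    have h1 : S.card < Finset.univ.card := Finset.card_lt_card (hSu.lt_of_le (Finset.subset_univ S))
    simpa using Nat.lt_succ_iff.mp (by simpa using h1)
  have hs_pos : 1 ≤ S.card := hS.card_pos
  have ht_pos : 1 ≤ T.card := hT.card_pos
  by_cases hsub : S ⊆ T
  · have hmeq : T ∩ S = S := Finset.inter_eq_right.mpr hsub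
    have hst : S.card < T.card := Finset.card_lt_card (hsub.ssubset_of_ne (Ne.symm hTS))
    rw [hmeq]
    have h1 : (1:ℤ) ≤ S.card := by exact_mod_cast hs_pos
    have h2 : (S.card : ℤ) < T.card := by exact_mod_cast hst
    nlinarith
  · have hm_lt : (T ∩ S).card < S.card := by
      apply Finset.card_lt_card
      obtain ⟨a, haS, haT⟩ := Finset.not_subset.mp hsub
      exact (Finset.inter_subset_right).ssubset_of_ne
        (fun h => haT (Finset.mem_inter.mp (h ▸ haS)).1)
    have h1 : ((T ∩ S).card : ℤ) < S.card := by exact_mod_cast hm_lt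
    have h2 : ((T ∩ S).card : ℤ) ≤ T.card := by exact_mod_cast hm_le_t
    have h3 : (S.card : ℤ) ≤ n := by exact_mod_cast hs_le_n
    have h4 : (1:ℤ) ≤ S.card := by exact_mod_cast hs_pos
    nlinarith

lemma real_ineq (S T : Finset (Fin (n+1))) (hS : S.Nonempty) (hSu : S ≠ Finset.univ)
    (hT : T.Nonempty) (hTS : T ≠ S) :
    ((T ∩ S).card : ℝ) - (T.card : ℝ) * S.card / (n+1)
      < (S.card : ℝ) - (S.card : ℝ) * S.card / (n+1) := by
  have hd : (0:ℝ) < (n:ℝ)+1 := by positivity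
  have key : (((n:ℤ)+1) * ((T ∩ S).card : ℤ) - (T.card : ℤ) * S.card : ℝ)
      < (((n:ℤ)+1) * S.card - (S.card : ℤ) * S.card : ℝ) := by
    exact_mod_cast int_ineq S T hS hSu hT hTS
  push_cast at key
  have h2 : ((T ∩ S).card : ℝ) - (T.card : ℝ) * S.card / (n+1)
      = (((n:ℝ)+1) * (T ∩ S).card - (T.card : ℝ) * S.card) / (n+1) := by field_simp
  have h3 : ((S.card : ℝ)) - (S.card : ℝ) * S.card / (n+1)
      = (((n:ℝ)+1) * S.card - (S.card : ℝ) * S.card) / (n+1) := by field_simp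
  rw [h2, h3]
  exact (div_lt_div_iff_of_pos_right hd).mpr (by nlinarith)


/-- for distinct `i, j` there are a linear functional `f` and a
constant `c` with `f = c` on `F_{i,j}` and `f < c` at all other vertices `u_T`;
consequently `conv F_{i,j}` is an exposed face of the Delaunay polytope, and all
elements of `F_{i,j}` are in convex position. -/
theorem cut_face_is_facet (n : ℕ) (hn : 2 ≤ n)
    (Q : Matrix (Fin (n+1)) (Fin (n+1)) ℤ) (hQ : IsConnectedLaplacian n Q)
    (i j : Fin (n+1)) (hij : i ≠ j) :
    (∃ (f : (Fin (n+1) → ℝ) →ₗ[ℝ] ℝ) (c : ℝ),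
        (∀ S : Finset (Fin (n+1)), S.Nonempty → S ≠ Finset.univ →
          i ∈ S → j ∉ S → f (uCut n Q S) = c) ∧
        (∀ T : Finset (Fin (n+1)), T.Nonempty → T ≠ Finset.univ →
          ¬(i ∈ T ∧ j ∉ T) → f (uCut n Q T) < c)) ∧
    IsExposed ℝ (HDelConv n Q) (convexHull ℝ (cutFace n Q i j)) ∧
    ∀ x ∈ cutFace n Q i j,
      x ∈ Set.extremePoints ℝ (convexHull ℝ (cutFace n Q i j)) := by
  -- the functional f
  obtain ⟨w, hw⟩ := surj_onto_H hQ
    (fun a => (if a = i then (1:ℝ) else 0) - (if a = j then 1 else 0))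
    (by rw [Finset.sum_sub_distrib]; simp)
  set f := dotL n w with hf
  have hfval : ∀ S : Finset (Fin (n+1)),
      f (uCut n Q S) = (if i ∈ S then (1:ℝ) else 0) - (if j ∈ S then 1 else 0) := by
    intro S
    rw [hf, dotL_uCut, hw]
    rw [Finset.sum_sub_distrib]
    congr 1 <;> simp [Finset.sum_ite_eq']
  -- generating set
  set gens : Set (Fin (n+1) → ℝ) := {x | ∃ S : Finset (Fin (n+1)), S.Nonempty ∧ x = uCut n Q S}
    with hgens
  have hGfin : gens.Finite := Set.Finite.subset (Set.finite_range (uCut n Q))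
    (by rintro x ⟨S, -, rfl⟩; exact ⟨S, rfl⟩)
  have hcutsub : cutFace n Q i j ⊆ gens := by
    rintro x ⟨S, hS1, hS2, hS3, hS4, rfl⟩; exact ⟨S, hS1, rfl⟩
  have hcutfin : (cutFace n Q i j).Finite := hGfin.subset hcutsub
  have hf_le : ∀ y ∈ gens, f y ≤ 1 := by
    rintro y ⟨S, -, rfl⟩
    rw [hfval]
    split_ifs <;> norm_num
  have hHDel : HDelConv n Q = convexHull ℝ gens := rfl
  have hA_le : ∀ x ∈ HDelConv n Q, f x ≤ 1 := by
    rw [hHDel]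
    exact fun x hx => convexHull_min hf_le (convex_halfSpace_le f.isLinear 1) hx
  have hface_eq : ∀ x ∈ convexHull ℝ (cutFace n Q i j), f x = 1 := by
    intro x hx
    refine convexHull_min ?_ (convex_hyperplane f.isLinear 1) hx
    rintro y ⟨S, hS1, hS2, hS3, hS4, rfl⟩
    show f (uCut n Q S) = 1
    rw [hfval]; simp [hS3, hS4]
  have hz0mem : uCut n Q {i} ∈ cutFace n Q i j := by
    refine ⟨{i}, Finset.singleton_nonempty i, ?_, Finset.mem_singleton_self i, ?_, rfl⟩
    · intro h
      have : j ∈ ({i} : Finset (Fin (n+1))) := h ▸ Finset.mem_univ j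
      exact hij (Finset.mem_singleton.mp this).symm
    · simp [Finset.mem_singleton]; exact fun h => hij h.symm
  have hargmax_sub : {y ∈ gens | f y = 1} ⊆ cutFace n Q i j := by
    rintro y ⟨⟨S, hSne, rfl⟩, hfy⟩
    rw [hfval] at hfy
    have hiS : i ∈ S := by by_contra h; simp [h] at hfy; split_ifs at hfy <;> norm_num at hfy
    have hjS : j ∉ S := by intro h; simp [hiS, h] at hfy
    exact ⟨S, hSne, fun h => hjS (h ▸ Finset.mem_univ j), hiS, hjS, rfl⟩
  refine ⟨⟨f, 1, ?_, ?_⟩, ?_, ?_⟩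
  · intro S _ _ hiS hjS; rw [hfval]; simp [hiS, hjS]
  · intro T _ _ hnot
    rw [hfval]
    by_cases hiT : i ∈ T
    · have hjT : j ∈ T := by by_contra h; exact hnot ⟨hiT, h⟩
      simp [hiT, hjT]
    · rw [if_neg hiT]
      split_ifs <;> norm_num
  -- exposedness
  · intro _
    refine ⟨LinearMap.toContinuousLinearMap f, ?_⟩
    ext x
    simp only [LinearMap.coe_toContinuousLinearMap', Set.mem_setOf_eq]
    constructor
    · intro hx
      have hxA : x ∈ HDelConv n Q := by
        rw [hHDel]; exact convexHull_mono hcutsub hx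
      exact ⟨hxA, fun y hy => by rw [hface_eq x hx]; exact hA_le y hy⟩
    · rintro ⟨hxA, hmax⟩
      have hz0A : uCut n Q {i} ∈ HDelConv n Q := by
        rw [hHDel]; exact subset_convexHull ℝ gens (hcutsub hz0mem)
      have h1 : f (uCut n Q {i}) = 1 := by
        rw [hfval]
        simp [Finset.mem_singleton]
        intro h; exact absurd h.symm hij
      have hfx : f x = 1 := le_antisymm (hA_le x hxA) (h1 ▸ hmax _ hz0A)
      have := mem_hull_argmax hGfin f 1 hf_le (hHDel ▸ hxA) hfx
      exact convexHull_mono hargmax_sub this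
  -- extreme points
  · rintro x ⟨S, hSne, hSu, hiS, hjS, rfl⟩
    obtain ⟨wS, hwS⟩ := surj_onto_H hQ
      (fun a => (if a ∈ S then (1:ℝ) else 0) - (S.card : ℝ)/(n+1))
      (by
        rw [Finset.sum_sub_distrib]
        have h1 : ∑ a : Fin (n+1), (if a ∈ S then (1:ℝ) else 0) = S.card := by
          have := sum_indicator (n := n) S Finset.univ
          simpa using this
        rw [h1, Finset.sum_const, Finset.card_univ]
        simp
        field_simp
        ring)
    set g := dotL n wS with hg
    have hgval : ∀ T : Finset (Fin (n+1)),
        g (uCut n Q T) = ((T ∩ S).card : ℝ) - (T.card : ℝ) * S.card / (n+1) := by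
      intro T
      rw [hg, dotL_uCut, hwS, Finset.sum_sub_distrib, sum_indicator]
      rw [Finset.sum_const]
      simp [mul_div_assoc]
    set cS : ℝ := (S.card : ℝ) - (S.card : ℝ) * S.card / (n+1) with hcS
    have hgS : g (uCut n Q S) = cS := by rw [hgval, Finset.inter_self]
    have hstrict : ∀ T : Finset (Fin (n+1)), T.Nonempty → T ≠ S →
        g (uCut n Q T) < cS := by
      intro T hTne hTS
      rw [hgval]
      exact real_ineq S T hSne hSu hTne hTS
    have hg_le : ∀ y ∈ cutFace n Q i j, g y ≤ cS := by
      rintro y ⟨T, hT1, hT2, hT3, hT4, rfl⟩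
      by_cases hTS : T = S
      · rw [hTS, hgS]
      · exact (hstrict T hT1 hTS).le
    have hg_hull : ∀ y ∈ convexHull ℝ (cutFace n Q i j), g y ≤ cS :=
      fun y hy => convexHull_min hg_le (convex_halfSpace_le g.isLinear cS) hy
    apply exposedPoints_subset_extremePoints
    refine ⟨subset_convexHull ℝ _ ⟨S, hSne, hSu, hiS, hjS, rfl⟩,
      LinearMap.toContinuousLinearMap g, ?_⟩
    intro y hy
    simp only [LinearMap.coe_toContinuousLinearMap']
    refine ⟨by rw [hgS]; exact hg_hull y hy, ?_⟩
    intro hge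
    rw [hgS] at hge
    have hgy : g y = cS := le_antisymm (hg_hull y hy) hge
    have hmem := mem_hull_argmax hcutfin g cS hg_le hy hgy
    have hsub : {z ∈ cutFace n Q i j | g z = cS} ⊆ {uCut n Q S} := by
      rintro z ⟨⟨T, hT1, hT2, hT3, hT4, rfl⟩, hgz⟩
      by_cases hTS : T = S
      · rw [hTS]; rfl
      · exact absurd hgz (ne_of_lt (hstrict T hT1 hTS))
    have := convexHull_mono hsub hmem
    rw [convexHull_singleton] at this
    exact this
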